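/- arXiv:1710.05007 — 7 statements merged into one kernel-verified Lean document; each statement's English description precedes it below -/
import Mathlib

section
/- Every nonempty compact subset of a partially ordered Hausdorff topological space (where all order intervals [u) and (u] are closed) is chain-complete: every nonempty chain contained in the subset has a least upper bound belonging to the subset. -/
/-- Every nonempty compact subset of a partially ordered Hausdorff topological space
(order intervals closed) is chain-complete. -/
theorem stmt_2 {X : Type*} [TopologicalSpace X] [T2Space X] [PartialOrder X]
    (hcl : ∀ u : X, IsClosed {x : X | u ≤ x} ∧ IsClosed {x : X | x ≤ u})
    (A : Set X) (hAne : A.Nonempty) (hAc : IsCompact A) :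
    ∀ c ⊆ A, IsChain (· ≤ ·) c → c.Nonempty → ∃ b ∈ A, IsLUB c b := by
  intro c hcA hchain hcne
  haveI : Nonempty c := hcne.to_subtype
  haveI : IsDirected c (· ≤ ·) := by
    constructor
    rintro ⟨x, hx⟩ ⟨y, hy⟩
    rcases eq_or_ne x y with rfl | hne
    · exact ⟨⟨x, hx⟩, le_refl _, le_refl _⟩
    rcases hchain hx hy hne with h | h
    · exact ⟨⟨y, hy⟩, h, le_refl _⟩
    · exact ⟨⟨x, hx⟩, le_refl _, h⟩
  haveI : Filter.NeBot (Filter.atTop : Filter c) := Filter.atTop_neBot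
  have hle : Filter.map (Subtype.val : c → X) Filter.atTop ≤ Filter.principal A := by
    rw [Filter.le_principal_iff, Filter.mem_map]
    exact Filter.Eventually.of_forall fun y => hcA y.2
  obtain ⟨b, hbA, hb⟩ := hAc hle
  have key : ∀ s : Set X, IsClosed s → s ∈ Filter.map (Subtype.val : c → X) Filter.atTop →
      b ∈ s := by
    intro s hs hmem
    have : ClusterPt b (Filter.principal s) := hb.mono (Filter.le_principal_iff.mpr hmem)
    rw [← mem_closure_iff_clusterPt] at this
    rwa [hs.closure_eq] at this
  refine ⟨b, hbA, ?_, ?_⟩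
  · intro x hx
    refine key {y : X | x ≤ y} (hcl x).1 ?_
    rw [Filter.mem_map]
    filter_upwards [Filter.eventually_ge_atTop (⟨x, hx⟩ : c)] with y hy
    exact hy
  · intro u hu
    refine key _ (hcl u).2 ?_
    rw [Filter.mem_map]
    exact Filter.Eventually.of_forall fun y => hu y.2
end

section
/- Every nonempty compact subset A of a partially ordered Hausdorff topological space (with closed order intervals) is universally inductive: for any chain {x_α} in the whole space such that every element of the chain has an upper bound lying in A, the chain itself has an upper bound in A. -/
/-- Every nonempty compact subset of a partially ordered Hausdorff topological space
(order intervals closed) is universally inductive. -/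
theorem stmt_3 {X : Type*} [TopologicalSpace X] [T2Space X] [PartialOrder X]
    (hcl : ∀ u : X, IsClosed {x : X | u ≤ x} ∧ IsClosed {x : X | x ≤ u})
    (A : Set X) (hAne : A.Nonempty) (hAc : IsCompact A) :
    ∀ c : Set X, IsChain (· ≤ ·) c → (∀ x ∈ c, ∃ a ∈ A, x ≤ a) →
      ∃ b ∈ A, ∀ x ∈ c, x ≤ b := by
  intro c hchain hub
  rcases c.eq_empty_or_nonempty with rfl | hcne
  · obtain ⟨a, ha⟩ := hAne
    exact ⟨a, ha, fun x hx => hx.elim⟩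
  · haveI : Nonempty c := hcne.to_subtype
    set U : c → Set X := fun x => A ∩ {a | x.1 ≤ a} with hU
    have hdir : Directed (· ⊇ ·) U := by
      intro x y
      rcases hchain.total x.2 y.2 with h | h
      · exact ⟨y, fun a ha => ⟨ha.1, h.trans ha.2⟩, fun a ha => ha⟩
      · exact ⟨x, fun a ha => ha, fun a ha => ⟨ha.1, h.trans ha.2⟩⟩
    have hne : ∀ x : c, (U x).Nonempty := by
      intro x
      obtain ⟨a, haA, hxa⟩ := hub x.1 x.2
      exact ⟨a, haA, hxa⟩
    have hcls : ∀ x : c, IsClosed (U x) :=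
      fun x => hAc.isClosed.inter (hcl x.1).1
    have hcpt : ∀ x : c, IsCompact (U x) :=
      fun x => hAc.inter_right (hcl x.1).1
    obtain ⟨b, hb⟩ := IsCompact.nonempty_iInter_of_directed_nonempty_isCompact_isClosed
      U hdir hne hcpt hcls
    simp only [Set.mem_iInter] at hb
    obtain ⟨x0⟩ := (inferInstance : Nonempty c)
    exact ⟨b, (hb x0).1, fun x hx => (hb ⟨x, hx⟩).2⟩
end

section
/- Every nonempty bounded closed convex subset of a partially ordered reflexive Banach space (whose order intervals are norm-closed and convex) is chain-complete. -/
open NormedSpace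

section Aux

variable {X : Type*} [NormedAddCommGroup X] [NormedSpace ℝ X]

/-- The inclusion into the double dual (with weak-* topology), as a linear equivalence,
given surjectivity (reflexivity). -/
instance {E : Type*} [NormedAddCommGroup E] [NormedSpace ℝ E] :
    LocallyConvexSpace ℝ (WeakDual ℝ E) :=
  WeakBilin.locallyConvexSpace (B := topDualPairing ℝ E)

noncomputable def dblEquiv (hrefl : Function.Surjective ⇑(inclusionInDoubleDual ℝ X)) :
    X ≃ₗ[ℝ] WeakDual ℝ (StrongDual ℝ X) :=
  LinearEquiv.ofBijective ((inclusionInDoubleDual ℝ X) : X →ₗ[ℝ] StrongDual ℝ (StrongDual ℝ X))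
    ⟨(inclusionInDoubleDualLi ℝ (E := X)).injective, hrefl⟩

lemma dblEquiv_apply (hrefl : Function.Surjective ⇑(inclusionInDoubleDual ℝ X)) (x : X)
    (f : StrongDual ℝ X) : (dblEquiv hrefl x) f = f x := rfl

/-- Mazur-type lemma: the image of a norm-closed convex set under the double dual embedding
is weak-* closed, when the space is reflexive. -/
lemma isClosed_image_dblEquiv (hrefl : Function.Surjective ⇑(inclusionInDoubleDual ℝ X))
    {S : Set X} (hScl : IsClosed S) (hScv : Convex ℝ S) :
    IsClosed ((dblEquiv hrefl) '' S) := by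
  set e := dblEquiv hrefl with he
  have h1 : Continuous (fun x : X => (e x : WeakDual ℝ (StrongDual ℝ X))) := by
    apply WeakDual.continuous_of_continuous_eval
    intro y
    have : (fun a : X => (e a) y) = fun a : X => y a := rfl
    rw [this]
    exact y.continuous
  have himg : e '' (closure S) = closure (e '' S) := by
    refine LinearEquiv.image_closure_of_convex (𝕜 := ℝ) (F := WeakDual ℝ (StrongDual ℝ X)) hScv e ?_ ?_
    · intro f
      have : ⇑(e.dualMap (f : WeakDual ℝ (StrongDual ℝ X) →ₗ[ℝ] ℝ)) = fun x : X => f (e x) := rfl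
      rw [this]
      exact f.continuous.comp h1
    · intro f
      have key : (fun g : WeakDual ℝ (StrongDual ℝ X) => f (e.symm g)) = fun g => g f := by
        funext g
        have : f (e.symm g) = (e (e.symm g)) f := rfl
        rw [this, e.apply_symm_apply]
      have : ⇑(e.symm.dualMap (f : X →ₗ[ℝ] ℝ)) = fun g : WeakDual ℝ (StrongDual ℝ X) => f (e.symm g) :=
        rfl
      rw [this, key]
      exact WeakDual.eval_continuous f
  have : e '' S = closure (e '' S) := by
    conv_lhs => rw [← hScl.closure_eq]
    exact himg
  rw [this]
  exact isClosed_closure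

/-- In a reflexive space, the image of a bounded closed convex set in the double dual
(weak-* topology) is compact. -/
lemma isCompact_image_dblEquiv (hrefl : Function.Surjective ⇑(inclusionInDoubleDual ℝ X))
    {S : Set X} (hSb : Bornology.IsBounded S) (hScl : IsClosed S) (hScv : Convex ℝ S) :
    IsCompact ((dblEquiv hrefl) '' S) := by
  obtain ⟨r, hr⟩ := hSb.exists_norm_le
  refine (WeakDual.isCompact_closedBall (𝕜 := ℝ) (E := StrongDual ℝ X) 0 r).of_isClosed_subset
    (isClosed_image_dblEquiv hrefl hScl hScv) ?_
  rintro - ⟨x, hx, rfl⟩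
  simp only [Set.mem_preimage, Metric.mem_closedBall, dist_zero_right]
  have : ‖(WeakDual.toStrongDual (dblEquiv hrefl x))‖ = ‖(inclusionInDoubleDualLi ℝ x :
      StrongDual ℝ (StrongDual ℝ X))‖ := rfl
  rw [this, (inclusionInDoubleDualLi ℝ (E := X)).norm_map]
  exact hr x hx

/-- Every nonempty finite subset of a chain has an upper bound in the chain. -/
lemma chain_finset_bound {α : Type*} [Preorder α] {c : Set α} (hc : IsChain (· ≤ ·) c)
    {x0 : α} (hx0 : x0 ∈ c) (F : Finset α) (hF : ↑F ⊆ c) :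
    ∃ m ∈ c, ∀ x ∈ F, x ≤ m := by
  classical
  induction F using Finset.induction_on with
  | empty => exact ⟨x0, hx0, by simp⟩
  | @insert a F ha ih =>
    have haC : a ∈ c := hF (Finset.mem_insert_self a F)
    obtain ⟨m, hm, hmF⟩ := ih (fun y hy => hF (Finset.mem_coe.mpr (Finset.mem_insert_of_mem (Finset.mem_coe.mp hy))))
    rcases eq_or_ne a m with rfl | hne
    · exact ⟨a, hm, fun x hx => by
        rcases Finset.mem_insert.mp hx with rfl | hx
        · exact le_refl x
        · exact hmF x hx⟩
    · rcases hc haC hm hne with h | h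
      · exact ⟨m, hm, fun x hx => by
          rcases Finset.mem_insert.mp hx with rfl | hx
          · exact h
          · exact hmF x hx⟩
      · exact ⟨a, haC, fun x hx => by
          rcases Finset.mem_insert.mp hx with rfl | hx
          · exact le_refl x
          · exact (hmF x hx).trans h⟩

end Aux

/-- Every nonempty bounded closed convex subset of a partially ordered reflexive Banach
space (order intervals norm-closed and convex) is chain-complete. -/
theorem stmt_4 {X : Type*} [NormedAddCommGroup X] [NormedSpace ℝ X] [CompleteSpace X]
    [PartialOrder X]
    (hrefl : Function.Surjective ⇑(NormedSpace.inclusionInDoubleDual ℝ X))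
    (hadd : ∀ x y z : X, x ≤ y → x + z ≤ y + z)
    (hsmul : ∀ (a : ℝ) (x y : X), 0 ≤ a → x ≤ y → a • x ≤ a • y)
    (hcl : ∀ u : X, IsClosed {x : X | u ≤ x} ∧ IsClosed {x : X | x ≤ u})
    (hcv : ∀ u : X, Convex ℝ {x : X | u ≤ x} ∧ Convex ℝ {x : X | x ≤ u})
    (A : Set X) (hAne : A.Nonempty) (hAb : Bornology.IsBounded A)
    (hAcl : IsClosed A) (hAcv : Convex ℝ A) :
    ∀ c ⊆ A, IsChain (· ≤ ·) c → c.Nonempty → ∃ b ∈ A, IsLUB c b := by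
  classical
  intro c hcA hchain hcne
  set e := dblEquiv hrefl with he
  -- the index type: elements of the chain, plus upper bounds of the chain
  let ι : Type _ := ↥c ⊕ ↥(upperBounds c)
  let Z : ι → Set (WeakDual ℝ (StrongDual ℝ X)) := fun i =>
    Sum.elim (fun x : ↥c => e '' ({y : X | (x : X) ≤ y} ∩ A))
      (fun u : ↥(upperBounds c) => e '' ({y : X | y ≤ (u : X)} ∩ A)) i
  have hZclosed : ∀ i, IsClosed (Z i) := by
    rintro (x | u)
    · exact isClosed_image_dblEquiv hrefl ((hcl x).1.inter hAcl) ((hcv x).1.inter hAcv)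
    · exact isClosed_image_dblEquiv hrefl ((hcl u).2.inter hAcl) ((hcv u).2.inter hAcv)
  have hK : IsCompact (e '' A) := isCompact_image_dblEquiv hrefl hAb hAcl hAcv
  obtain ⟨x0, hx0⟩ := hcne
  have hst : ∀ t : Finset ι, ((e '' A) ∩ ⋂ i ∈ t, Z i).Nonempty := by
    intro t
    -- the chain elements appearing in `t`
    let F : Finset X := t.image (Sum.elim (fun x : ↥c => (x : X)) (fun _ => x0))
    have hF : ↑F ⊆ c := by
      intro y hy
      simp only [F, Finset.coe_image, Set.mem_image] at hy
      obtain ⟨i, _, rfl⟩ := hy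
      rcases i with x | u
      · exact x.2
      · exact hx0
    obtain ⟨m, hmc, hmF⟩ := chain_finset_bound hchain hx0 F hF
    refine ⟨e m, ⟨m, hcA hmc, rfl⟩, ?_⟩
    simp only [Set.mem_iInter]
    rintro (x | u) hi
    · refine ⟨m, ⟨?_, hcA hmc⟩, rfl⟩
      exact hmF (x : X) (Finset.mem_image_of_mem _ hi)
    · exact ⟨m, ⟨u.2 hmc, hcA hmc⟩, rfl⟩
  obtain ⟨w, hwA, hwZ⟩ := hK.inter_iInter_nonempty Z hZclosed hst
  obtain ⟨b, hbA, rfl⟩ := hwA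
  simp only [Set.mem_iInter] at hwZ
  refine ⟨b, hbA, ?_, ?_⟩
  · intro x hx
    obtain ⟨y, ⟨hxy, _⟩, hy⟩ := hwZ (Sum.inl ⟨x, hx⟩)
    rwa [e.injective hy] at hxy
  · intro u hu
    obtain ⟨y, ⟨hyu, _⟩, hy⟩ := hwZ (Sum.inr ⟨u, hu⟩)
    rwa [e.injective hy] at hyu
end

section
/- Let (P, ≽) be a chain-complete poset and F : P → (nonempty subsets of P) a set-valued map such that: (A1) F is order-increasing upward, i.e., x₁ ≼ x₂ and z ∈ F(x₁) implies there exists w ∈ F(x₂) with z ≼ w; (A2) F(x) is universally inductive for every x; (A3) there exist y* ∈ P and v* ∈ F(y*) with y* ≼ v*. Then F has a fixed point, i.e., there exists x* ∈ P with x* ∈ F(x*). -/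
/-- Fixed point theorem for set-valued maps on chain-complete posets. -/
theorem stmt_5 {P : Type*} [PartialOrder P]
    (hP : ∀ c : Set P, IsChain (· ≤ ·) c → c.Nonempty → ∃ b : P, IsLUB c b)
    (F : P → Set P) (hne : ∀ x : P, (F x).Nonempty)
    (hinc : ∀ x₁ x₂ : P, x₁ ≤ x₂ → ∀ z ∈ F x₁, ∃ w ∈ F x₂, z ≤ w)
    (hui : ∀ x : P, ∀ c : Set P, IsChain (· ≤ ·) c →
      (∀ p ∈ c, ∃ a ∈ F x, p ≤ a) → ∃ b ∈ F x, ∀ p ∈ c, p ≤ b)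
    (hy : ∃ y v : P, v ∈ F y ∧ y ≤ v) :
    ∃ x : P, x ∈ F x := by
  obtain ⟨y, v, hv, hyv⟩ := hy
  set A : Set P := {x | ∃ u ∈ F x, x ≤ u} with hA
  have hyA : y ∈ A := ⟨v, hv, hyv⟩
  have hZ : ∀ c ⊆ A, IsChain (· ≤ ·) c → ∀ p ∈ c, ∃ ub ∈ A, ∀ z ∈ c, z ≤ ub := by
    intro c hcA hchain p hp
    obtain ⟨b, hb⟩ := hP c hchain ⟨p, hp⟩
    have hub : ∀ q ∈ c, ∃ a ∈ F b, q ≤ a := by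
      intro q hq
      obtain ⟨u, hu, hqu⟩ := hcA hq
      obtain ⟨w, hw, huw⟩ := hinc q b (hb.1 hq) u hu
      exact ⟨w, hw, hqu.trans huw⟩
    obtain ⟨b', hb', hb'ub⟩ := hui b c hchain hub
    exact ⟨b, ⟨b', hb', hb.2 hb'ub⟩, fun z hz => hb.1 hz⟩
  obtain ⟨m, _, hmA, hmax⟩ := zorn_le_nonempty₀ A hZ y hyA
  obtain ⟨u, hu, hmu⟩ := hmA
  have huA : u ∈ A := by
    obtain ⟨w, hw, huw⟩ := hinc m u hmu u hu
    exact ⟨w, hw, huw⟩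
  have := le_antisymm (hmax huA hmu) hmu
  exact ⟨m, this ▸ hu⟩
end

section
/- Under the hypotheses of the set-valued fixed point theorem on a chain-complete poset (F order-increasing upward, values universally inductive, and existence of y* ≼ v* ∈ F(y*)), the fixed point set of F contains a point x* with x* ≽ y*. -/
/-- Under the hypotheses of the set-valued fixed point theorem, the fixed point set
contains a point above `y⋆`. -/
theorem stmt_6 {P : Type*} [PartialOrder P]
    (hP : ∀ c : Set P, IsChain (· ≤ ·) c → c.Nonempty → ∃ b : P, IsLUB c b)
    (F : P → Set P) (hne : ∀ x : P, (F x).Nonempty)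
    (hinc : ∀ x₁ x₂ : P, x₁ ≤ x₂ → ∀ z ∈ F x₁, ∃ w ∈ F x₂, z ≤ w)
    (hui : ∀ x : P, ∀ c : Set P, IsChain (· ≤ ·) c →
      (∀ p ∈ c, ∃ a ∈ F x, p ≤ a) → ∃ b ∈ F x, ∀ p ∈ c, p ≤ b)
    (ystar vstar : P) (hv : vstar ∈ F ystar) (hyv : ystar ≤ vstar) :
    ∃ xstar : P, xstar ∈ F xstar ∧ ystar ≤ xstar := by
  set A : Set P := {x | ystar ≤ x ∧ ∃ w ∈ F x, x ≤ w} with hA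
  have hyA : ystar ∈ A := ⟨le_rfl, vstar, hv, hyv⟩
  obtain ⟨m, hym, hmA, hmax⟩ := zorn_le_nonempty₀ A (fun c hcA hc y hy => by
    obtain ⟨b, hb⟩ := hP c hc ⟨y, hy⟩
    have hub : ∀ p ∈ c, ∃ a ∈ F b, p ≤ a := by
      intro p hp
      obtain ⟨hyp, w, hw, hpw⟩ := hcA hp
      obtain ⟨a, ha, hwa⟩ := hinc p b (hb.1 hp) w hw
      exact ⟨a, ha, hpw.trans hwa⟩
    obtain ⟨u, hu, huub⟩ := hui b c hc hub
    refine ⟨b, ⟨(hcA hy).1.trans (hb.1 hy), u, hu, hb.2 huub⟩, fun z hz => hb.1 hz⟩)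
    ystar hyA
  obtain ⟨hym', w, hw, hmw⟩ := hmA
  obtain ⟨u, hu, hwu⟩ := hinc m w hmw w hw
  have hwA : w ∈ A := ⟨hym'.trans hmw, u, hu, hwu⟩
  have : m = w := le_antisymm hmw (hmax hwA hmw)
  exact ⟨m, this ▸ hw, hym⟩
end

section
/- Let C ⊆ X, D ⊆ Y, f : C → L(X,U), g : D → L(Y,V), A : X → Y with f, g order-positive and A order-increasing. Then the set-valued map F(x) = {z ∈ C : f(x)(z) is the ≽^U-smallest element of {f(x)(t) : t ∈ C} and g(Ax)(Az) is the ≽^V-smallest element of {g(Ax)(s) : s ∈ D}} is order-increasing in the strong sense that x₁ ≼^X x₂ implies F(x₁) ⊆ F(x₂). -/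
/-- The split argmin set-valued map `F` is order-increasing in the strong sense:
`x₁ ≤ x₂` implies `F x₁ ⊆ F x₂`. -/
theorem stmt_8 {X Y U V : Type*}
    [AddCommGroup X] [Module ℝ X] [PartialOrder X]
    [AddCommGroup Y] [Module ℝ Y] [PartialOrder Y]
    [AddCommGroup U] [PartialOrder U] [IsOrderedAddMonoid U] [Module ℝ U]
    [AddCommGroup V] [PartialOrder V] [IsOrderedAddMonoid V] [Module ℝ V]
    (C : Set X) (D : Set Y)
    (f : X → X →ₗ[ℝ] U) (g : Y → Y →ₗ[ℝ] V) (A : X → Y)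
    (hf : ∀ x ∈ C, ∀ y ∈ C, x ≤ y → ∀ z : X, 0 ≤ f x z → 0 ≤ f y z)
    (hg : ∀ y₁ y₂ : Y, y₁ ≤ y₂ → ∀ w : Y, 0 ≤ g y₁ w → 0 ≤ g y₂ w)
    (hA : ∀ x₁ x₂ : X, x₁ ≤ x₂ → A x₁ ≤ A x₂)
    {x₁ x₂ : X} (hx₁ : x₁ ∈ C) (hx₂ : x₂ ∈ C) (h12 : x₁ ≤ x₂) :
    {z ∈ C | (∀ t ∈ C, f x₁ z ≤ f x₁ t) ∧ ∀ s ∈ D, g (A x₁) (A z) ≤ g (A x₁) s} ⊆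
      {z ∈ C | (∀ t ∈ C, f x₂ z ≤ f x₂ t) ∧ ∀ s ∈ D, g (A x₂) (A z) ≤ g (A x₂) s} := by
  rintro z ⟨hzC, hfz, hgz⟩
  refine ⟨hzC, fun t ht => ?_, fun s hs => ?_⟩
  · have h1 : 0 ≤ f x₁ (t - z) := by
      rw [map_sub, sub_nonneg]; exact hfz t ht
    have h2 := hf x₁ hx₁ x₂ hx₂ h12 (t - z) h1
    rwa [map_sub, sub_nonneg] at h2
  · have h1 : 0 ≤ g (A x₁) (s - A z) := by
      rw [map_sub, sub_nonneg]; exact hgz s hs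
    have h2 := hg (A x₁) (A x₂) (hA x₁ x₂ h12) (s - A z) h1
    rwa [map_sub, sub_nonneg] at h2
end

section
/- Let (P, ≽) be a chain-complete poset and F : P → 2^P \ {∅} order-increasing upward with universally inductive values and some y* ≼ v* ∈ F(y*). Then the fixed point set 𝓕(F) is an inductive poset: every nonempty chain in 𝓕(F) has an upper bound in 𝓕(F); consequently F has a ≽-maximal fixed point. -/
/-- Key lemma: from `y ≤ v ∈ F y` one gets a fixed point above `y`. -/
lemma stmt_19_key {P : Type*} [PartialOrder P]
    (hP : ∀ c : Set P, IsChain (· ≤ ·) c → c.Nonempty → ∃ b : P, IsLUB c b)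
    (F : P → Set P)
    (hinc : ∀ x₁ x₂ : P, x₁ ≤ x₂ → ∀ z ∈ F x₁, ∃ w ∈ F x₂, z ≤ w)
    (hui : ∀ x : P, ∀ c : Set P, IsChain (· ≤ ·) c →
      (∀ p ∈ c, ∃ a ∈ F x, p ≤ a) → ∃ b ∈ F x, ∀ p ∈ c, p ≤ b)
    (y v : P) (hv : v ∈ F y) (hyv : y ≤ v) :
    ∃ x, x ∈ F x ∧ y ≤ x := by
  set S : Set P := {x | y ≤ x ∧ ∃ w ∈ F x, x ≤ w} with hS
  have hyS : y ∈ S := ⟨le_refl y, v, hv, hyv⟩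
  have hchain : ∀ c ⊆ S, IsChain (· ≤ ·) c → ∀ p ∈ c, ∃ ub ∈ S, ∀ z ∈ c, z ≤ ub := by
    intro c hcS hc p hp
    obtain ⟨u, hu⟩ := hP c hc ⟨p, hp⟩
    have hbnd : ∀ q ∈ c, ∃ a ∈ F u, q ≤ a := by
      intro q hq
      obtain ⟨hyq, w, hwF, hqw⟩ := hcS hq
      obtain ⟨a, haF, hwa⟩ := hinc q u (hu.1 hq) w hwF
      exact ⟨a, haF, hqw.trans hwa⟩
    obtain ⟨b, hbF, hb⟩ := hui u c hc hbnd
    have hub : u ≤ b := hu.2 hb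
    have hyu : y ≤ u := (hcS hp).1.trans (hu.1 hp)
    exact ⟨u, ⟨hyu, b, hbF, hub⟩, fun z hz => hu.1 hz⟩
  obtain ⟨m, hym, hmax⟩ := zorn_le_nonempty₀ S hchain y hyS
  obtain ⟨_, w, hwF, hmw⟩ := hmax.1
  obtain ⟨w', hw'F, hww'⟩ := hinc m w hmw w hwF
  have hwS : w ∈ S := ⟨hym.trans hmw, w', hw'F, hww'⟩
  have : w = m := le_antisymm (hmax.2 hwS hmw) hmw
  exact ⟨m, this ▸ hwF, hym⟩

/-- The fixed point set of an increasing set-valued map on a chain-complete poset is an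
inductive poset; consequently there is a maximal fixed point. -/
theorem stmt_19 {P : Type*} [PartialOrder P]
    (hP : ∀ c : Set P, IsChain (· ≤ ·) c → c.Nonempty → ∃ b : P, IsLUB c b)
    (F : P → Set P) (hne : ∀ x : P, (F x).Nonempty)
    (hinc : ∀ x₁ x₂ : P, x₁ ≤ x₂ → ∀ z ∈ F x₁, ∃ w ∈ F x₂, z ≤ w)
    (hui : ∀ x : P, ∀ c : Set P, IsChain (· ≤ ·) c →
      (∀ p ∈ c, ∃ a ∈ F x, p ≤ a) → ∃ b ∈ F x, ∀ p ∈ c, p ≤ b)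
    (ystar vstar : P) (hv : vstar ∈ F ystar) (hyv : ystar ≤ vstar) :
    (∀ c ⊆ {x : P | x ∈ F x}, IsChain (· ≤ ·) c → c.Nonempty →
      ∃ b ∈ {x : P | x ∈ F x}, ∀ p ∈ c, p ≤ b) ∧
    ∃ xstar ∈ {x : P | x ∈ F x}, ∀ z ∈ {x : P | x ∈ F x}, xstar ≤ z → z = xstar := by
  have hind : ∀ c ⊆ {x : P | x ∈ F x}, IsChain (· ≤ ·) c → c.Nonempty →
      ∃ b ∈ {x : P | x ∈ F x}, ∀ p ∈ c, p ≤ b := by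
    intro c hcF hc hcne
    obtain ⟨u, hu⟩ := hP c hc hcne
    have hbnd : ∀ q ∈ c, ∃ a ∈ F u, q ≤ a := by
      intro q hq
      obtain ⟨a, haF, hqa⟩ := hinc q u (hu.1 hq) q (hcF hq)
      exact ⟨a, haF, hqa⟩
    obtain ⟨b, hbF, hb⟩ := hui u c hc hbnd
    have hub : u ≤ b := hu.2 hb
    obtain ⟨x, hxF, hux⟩ := stmt_19_key hP F hinc hui u b hbF hub
    exact ⟨x, hxF, fun p hp => (hu.1 hp).trans hux⟩
  refine ⟨hind, ?_⟩
  obtain ⟨x0, hx0F, _⟩ := stmt_19_key hP F hinc hui ystar vstar hv hyv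
  obtain ⟨m, _, hmax⟩ := zorn_le_nonempty₀ {x : P | x ∈ F x}
    (fun c hcS hc p hp => hind c hcS hc ⟨p, hp⟩) x0 hx0F
  exact ⟨m, hmax.1, fun z hz hmz => le_antisymm (hmax.2 hz hmz) hmz⟩
end
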